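/- Let D ≥ 1 and p < 1, and let B be the event that there exist sites x₁, x₂, x₃, … ∈ Z^D and a singly-infinite self-avoiding path 0 = y₀, y₁, y₂, … in Z^D such that the sites x_i + y_j, for all i ≥ 1 and j ≥ 0, are pairwise distinct and all open. Then P_p(B) = 0. -/

import Mathlib

open MeasureTheory

/-- The ℓ¹-norm of an integer vector. -/
def norm1 {n : ℕ} (x : Fin n → ℤ) : ℤ := ∑ i, |x i|

/-- `μ` is a product Bernoulli(`p`) measure on site configurations: a probability
measure under which the states of finitely many sites are independent, each site
being open (`true`) with probability `p`. -/
def IsBernoulli {S : Type*} (p : ℝ) (μ : Measure (S → Bool)) : Prop :=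
  IsProbabilityMeasure μ ∧
    ∀ (A : Finset S) (b : S → Bool),
      μ {ω | ∀ s ∈ A, ω s = b s} = ∏ s ∈ A, ENNReal.ofReal (if b s then p else 1 - p)

/-- One of the `2D` unit steps of `ℤ^D`. -/
def unitVec {D : ℕ} (db : Fin D × Bool) : Fin D → ℤ :=
  Pi.single db.1 (if db.2 then 1 else -1)

/-- A vector of ℓ¹-norm one is a unit step. -/
lemma exists_unitVec {D : ℕ} {v : Fin D → ℤ} (h : norm1 v = 1) :
    ∃ db : Fin D × Bool, v = unitVec db := by
  obtain ⟨i, hi⟩ : ∃ i, v i ≠ 0 := by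
    by_contra hc
    push_neg at hc
    simp [norm1, hc] at h
  have hsplit : |v i| + ∑ j ∈ Finset.univ.erase i, |v j| = 1 := by
    rw [Finset.add_sum_erase Finset.univ (fun j => |v j|) (Finset.mem_univ i)]; exact h
  have h1 : 1 ≤ |v i| := Int.one_le_abs (by simpa using hi)
  have hz : ∀ j ∈ Finset.univ.erase i, |v j| = 0 := by
    rw [← Finset.sum_eq_zero_iff_of_nonneg (fun j _ => abs_nonneg (v j))]
    have hnn : 0 ≤ ∑ j ∈ Finset.univ.erase i, |v j| :=
      Finset.sum_nonneg (fun j _ => abs_nonneg (v j))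
    omega
  have habs : |v i| = 1 := by
    have : ∑ j ∈ Finset.univ.erase i, |v j| = 0 := Finset.sum_eq_zero hz
    omega
  have hvj : ∀ j, j ≠ i → v j = 0 := by
    intro j hj
    exact abs_eq_zero.mp (hz j (Finset.mem_erase.mpr ⟨hj, Finset.mem_univ j⟩))
  rcases abs_eq (by norm_num : (0:ℤ) ≤ 1) |>.mp habs with h1 | h1
  · exact ⟨(i, true), funext fun t => by
      by_cases ht : t = i
      · subst ht; simp [unitVec, h1]
      · simp [unitVec, hvj t ht, Pi.single_eq_of_ne ht]⟩
  · exact ⟨(i, false), funext fun t => by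
      by_cases ht : t = i
      · subst ht; simp [unitVec, h1]
      · simp [unitVec, hvj t ht, Pi.single_eq_of_ne ht]⟩

/-- Partial sums of a word of unit steps. -/
def psum {D k : ℕ} (w : Fin k → Fin D × Bool) (j : ℕ) : Fin D → ℤ :=
  ∑ t ∈ Finset.univ.filter fun t : Fin k => (t : ℕ) < j, unitVec (w t)

lemma psum_zero {D k : ℕ} (w : Fin k → Fin D × Bool) : psum w 0 = 0 := by
  simp [psum]

lemma psum_succ {D k : ℕ} (w : Fin k → Fin D × Bool) {j : ℕ} (hj : j < k) :
    psum w (j + 1) = psum w j + unitVec (w ⟨j, hj⟩) := by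
  have hset : (Finset.univ.filter fun t : Fin k => (t : ℕ) < j + 1)
      = insert ⟨j, hj⟩ (Finset.univ.filter fun t : Fin k => (t : ℕ) < j) := by
    ext t
    simp only [Finset.mem_filter, Finset.mem_insert, Finset.mem_univ, true_and]
    constructor
    · intro h
      rcases Nat.lt_succ_iff_lt_or_eq.mp h with h | h
      · exact Or.inr h
      · exact Or.inl (Fin.ext h)
    · rintro (rfl | h)
      · simp
      · omega
  rw [psum, hset, Finset.sum_insert (by simp), ← psum, add_comm]

/-- The site map: column `i`, path position `j`. -/
def smap {D m k : ℕ} (xv : Fin m → Fin D → ℤ) (w : Fin k → Fin D × Bool)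
    (q : Fin m × Fin (k + 1)) : Fin D → ℤ :=
  xv q.1 + psum w (q.2 : ℕ)

/-- The event that the `m * (k+1)` pairwise-distinct sites determined by the
columns `xv` and the word `w` are all open. -/
def Ev {D : ℕ} (m k : ℕ) (xv : Fin m → Fin D → ℤ) (w : Fin k → Fin D × Bool) :
    Set ((Fin D → ℤ) → Bool) :=
  {ω | Function.Injective (smap xv w) ∧ ∀ q, ω (smap xv w q) = true}

lemma Ev_measure_le {D : ℕ} (p : ℝ) (μ : Measure ((Fin D → ℤ) → Bool))
    (hμ : IsBernoulli p μ) (m k : ℕ) (xv : Fin m → Fin D → ℤ)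
    (w : Fin k → Fin D × Bool) :
    μ (Ev m k xv w) ≤ ENNReal.ofReal p ^ (m * (k + 1)) := by
  by_cases hinj : Function.Injective (smap xv w)
  · set A : Finset (Fin D → ℤ) := Finset.image (smap xv w) Finset.univ with hA
    have hsub : Ev m k xv w ⊆ {ω | ∀ s ∈ A, ω s = (fun _ => true) s} := by
      rintro ω ⟨-, h⟩ s hs
      obtain ⟨a, -, rfl⟩ := Finset.mem_image.mp hs
      exact h a
    calc μ (Ev m k xv w) ≤ μ {ω | ∀ s ∈ A, ω s = (fun _ => true) s} := measure_mono hsub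
      _ = ∏ s ∈ A, ENNReal.ofReal (if (fun _ : Fin D → ℤ => true) s then p else 1 - p) :=
          hμ.2 A (fun _ => true)
      _ = ENNReal.ofReal p ^ (m * (k + 1)) := by
          have hcongr : ∀ s ∈ A,
              ENNReal.ofReal (if (fun _ : Fin D → ℤ => true) s then p else 1 - p)
                = ENNReal.ofReal p := fun s _ => by simp
          rw [Finset.prod_congr rfl hcongr, Finset.prod_const,
            hA, Finset.card_image_of_injective _ hinj]
          simp [Fintype.card_prod]
  · have : Ev m k xv w = ∅ := by
      ext ω; simp only [Ev, Set.mem_setOf_eq, Set.mem_empty_iff_false, iff_false]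
      exact fun h => hinj h.1
    simp [this]

/-- For `D ≥ 1` and `p < 1`: the event that there are sites `x₁, x₂, … ∈ ℤ^D` and a
singly-infinite self-avoiding path `0 = y₀, y₁, …` such that the sites `x_i + y_j`
are pairwise distinct and all open has `P_p`-probability zero. -/
theorem translates_along_path_null (D : ℕ) (hD : 1 ≤ D) (p : ℝ) (hp : p < 1)
    (μ : Measure ((Fin D → ℤ) → Bool)) (hμ : IsBernoulli p μ) :
    μ {ω | ∃ x : ℕ → Fin D → ℤ, ∃ y : ℕ → Fin D → ℤ,
        y 0 = 0 ∧
        (∀ j, norm1 (y (j + 1) - y j) = 1) ∧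
        Function.Injective (fun q : ℕ × ℕ => x q.1 + y q.2) ∧
        ∀ i j, ω (x i + y j) = true} = 0 := by
  set q : ENNReal := ENNReal.ofReal p with hqdef
  have hq1 : q < 1 := by
    rw [hqdef]; exact_mod_cast ENNReal.ofReal_lt_one.mpr hp
  set c : ENNReal := ((2 * D : ℕ) : ENNReal) with hcdef
  have hc0 : c ≠ 0 := by
    rw [hcdef]
    simp only [ne_eq, Nat.cast_eq_zero]
    omega
  have hctop : c ≠ ⊤ := by rw [hcdef]; exact ENNReal.natCast_ne_top _
  -- choose m with c * q ^ m < 1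
  obtain ⟨m, hm⟩ : ∃ m : ℕ, c * q ^ m < 1 := by
    have htend : Filter.Tendsto (fun n : ℕ => q ^ n) Filter.atTop (nhds 0) :=
      ENNReal.tendsto_pow_atTop_nhds_zero_of_lt_one hq1
    have hcinv : (0 : ENNReal) < c⁻¹ := ENNReal.inv_pos.mpr hctop
    obtain ⟨m, hm⟩ := (htend.eventually_lt_const hcinv).exists
    refine ⟨m, ?_⟩
    calc c * q ^ m < c * c⁻¹ := by
          exact (ENNReal.mul_lt_mul_iff_right hc0 hctop).mpr hm
      _ = 1 := ENNReal.mul_inv_cancel hc0 hctop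
  have hqle1 : q ≤ 1 := le_of_lt hq1
  -- the level-k union bound: at most (2D)^k words, each of probability q^(m(k+1))
  have hlevel : ∀ (xv : Fin m → Fin D → ℤ) (k : ℕ),
      μ (⋃ w : Fin k → Fin D × Bool, Ev m k xv w) ≤ (c * q ^ m) ^ k := by
    intro xv k
    have hcard : (Fintype.card (Fin k → Fin D × Bool) : ENNReal) = c ^ k := by
      rw [hcdef]
      norm_cast
      simp [Fintype.card_prod, mul_comm]
    calc μ (⋃ w : Fin k → Fin D × Bool, Ev m k xv w)
        ≤ ∑ w : Fin k → Fin D × Bool, μ (Ev m k xv w) := measure_iUnion_fintype_le μ _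
      _ ≤ ∑ _w : Fin k → Fin D × Bool, q ^ (m * (k + 1)) :=
          Finset.sum_le_sum fun w _ => Ev_measure_le p μ hμ m k xv w
      _ = (Fintype.card (Fin k → Fin D × Bool) : ENNReal) * q ^ (m * (k + 1)) := by
          rw [Finset.sum_const, Finset.card_univ, nsmul_eq_mul]
      _ = c ^ k * ((q ^ m) ^ k * q ^ m) := by
          rw [hcard, mul_add m k 1, pow_add, pow_mul, mul_one]
      _ ≤ c ^ k * ((q ^ m) ^ k * 1) := by
          gcongr
          exact pow_le_one' hqle1 m
      _ = (c * q ^ m) ^ k := by rw [mul_one, mul_pow]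
  -- hence, for fixed columns, the intersection over all k is null
  have hS : ∀ xv : Fin m → Fin D → ℤ,
      μ (⋂ k, ⋃ w : Fin k → Fin D × Bool, Ev m k xv w) = 0 := by
    intro xv
    have hle : ∀ k, μ (⋂ k', ⋃ w : Fin k' → Fin D × Bool, Ev m k' xv w) ≤ (c * q ^ m) ^ k :=
      fun k => le_trans (measure_mono (Set.iInter_subset _ k)) (hlevel xv k)
    have htend : Filter.Tendsto (fun k : ℕ => (c * q ^ m) ^ k) Filter.atTop (nhds 0) :=
      ENNReal.tendsto_pow_atTop_nhds_zero_of_lt_one hm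
    exact le_antisymm (ge_of_tendsto' htend hle) zero_le
  -- the event is contained in the countable union over column choices
  refine measure_mono_null ?_ (measure_iUnion_null hS)
  rintro ω ⟨x, y, hy0, hstep, hinj, hopen⟩
  refine Set.mem_iUnion.mpr ⟨fun i => x i, Set.mem_iInter.mpr fun k => ?_⟩
  choose f hf using fun t : ℕ => exists_unitVec (hstep t)
  refine Set.mem_iUnion.mpr ⟨fun t : Fin k => f t, ?_⟩
  have hps : ∀ j : ℕ, j ≤ k → psum (fun t : Fin k => f (t : ℕ)) j = y j := by
    intro j
    induction j with
    | zero => intro _; rw [psum_zero, hy0]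
    | succ j ih =>
      intro hj
      have hjk : j < k := hj
      rw [psum_succ _ hjk, ih (le_of_lt hjk), ← hf j]
      abel
  have hsm : ∀ a : Fin m × Fin (k + 1),
      smap (fun i : Fin m => x i) (fun t : Fin k => f (t : ℕ)) a = x a.1 + y a.2 := by
    intro a
    rw [smap, hps a.2 (Nat.lt_succ_iff.mp a.2.isLt)]
  constructor
  · intro a b hab
    rw [hsm, hsm] at hab
    have := hinj (a₁ := ((a.1 : ℕ), (a.2 : ℕ))) (a₂ := ((b.1 : ℕ), (b.2 : ℕ))) hab
    obtain ⟨h1, h2⟩ := Prod.mk.injEq _ _ _ _ ▸ this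
    exact Prod.ext (Fin.ext h1) (Fin.ext h2)
  · intro a
    rw [hsm]
    exact hopen a.1 a.2
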